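/- Let R > 0 and ω ≠ 0 be real numbers with R²ω² = 1, and define x, y, z : ℝ → ℝ by x(s) = R cos(ωs), y(s) = R sin(ωs), z(s) = R²ωs. Set v(s) := z'(s) + y(s)x'(s) − x(s)y'(s). Then for every s ∈ ℝ: (i) v(s) = 0; (ii) x'(s)² + y'(s)² − v(s)² = 1; and (iii) the triple (x''(s) − 2y'(s)v(s), y''(s) + 2x'(s)v(s), v'(s)) equals (−Rω²cos(ωs), −Rω²sin(ωs), 0), which is a nonzero vector whose third component vanishes. -/

import Mathlib

private lemma hd_cos (R ω s : ℝ) :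
    HasDerivAt (fun s => R * Real.cos (ω * s)) (R * (-Real.sin (ω * s) * ω)) s := by
  simpa using (((Real.hasDerivAt_cos (ω * s)).comp s ((hasDerivAt_id s).const_mul ω))).const_mul R

private lemma hd_sin (R ω s : ℝ) :
    HasDerivAt (fun s => R * Real.sin (ω * s)) (R * (Real.cos (ω * s) * ω)) s := by
  simpa using (((Real.hasDerivAt_sin (ω * s)).comp s ((hasDerivAt_id s).const_mul ω))).const_mul R

/-- **The horizontal helicoidal Legendre contact whirl family
(Section 5.2.2).**  Let `R > 0`, `ω ≠ 0` with `R²ω² = 1`, and consider the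
curve `α(s) = (R cos ωs, R sin ωs, R²ωs)` in the Lorentzian Heisenberg space,
with Reeb component `v = z' + y x' − x y'` of the tangent.  Then for every
`s`: (i) `v(s) = 0` (the curve is Legendre); (ii) `x'² + y'² − v² = 1` (unit
spacelike); and (iii) the acceleration components
`(x'' − 2y'v, y'' + 2x'v, v')` equal
`(−Rω² cos ωs, −Rω² sin ωs, 0)`, a nonzero vector whose third component
vanishes. -/
theorem heisenberg_helicoidal_legendre_whirl
    (R ω : ℝ) (hR : 0 < R) (hω : ω ≠ 0) (hRω : R ^ 2 * ω ^ 2 = 1)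
    (x y z v : ℝ → ℝ)
    (hx : x = fun s => R * Real.cos (ω * s))
    (hy : y = fun s => R * Real.sin (ω * s))
    (hz : z = fun s => R ^ 2 * ω * s)
    (hv : v = fun s => deriv z s + y s * deriv x s - x s * deriv y s) :
    ∀ s : ℝ,
      v s = 0 ∧
      (deriv x s) ^ 2 + (deriv y s) ^ 2 - (v s) ^ 2 = 1 ∧
      (deriv (deriv x) s - 2 * deriv y s * v s,
        deriv (deriv y) s + 2 * deriv x s * v s,
        deriv v s)
        = (-(R * ω ^ 2) * Real.cos (ω * s),
            -(R * ω ^ 2) * Real.sin (ω * s), (0 : ℝ)) ∧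
      (-(R * ω ^ 2) * Real.cos (ω * s),
        -(R * ω ^ 2) * Real.sin (ω * s), (0 : ℝ))
        ≠ ((0 : ℝ), (0 : ℝ), (0 : ℝ)) := by
  have hdx : deriv x = fun s => -(R * ω) * Real.sin (ω * s) := by
    funext s; rw [hx, (hd_cos R ω s).deriv]; ring
  have hdy : deriv y = fun s => (R * ω) * Real.cos (ω * s) := by
    funext s; rw [hy, (hd_sin R ω s).deriv]; ring
  have hdz : deriv z = fun s => R ^ 2 * ω := by
    funext s; rw [hz]
    have : HasDerivAt (fun s : ℝ => R ^ 2 * ω * s) (R ^ 2 * ω) s := by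
      simpa using (hasDerivAt_id s).const_mul (R ^ 2 * ω)
    exact this.deriv
  have hv0 : v = fun _ => (0 : ℝ) := by
    funext s
    rw [hv, hdx, hdy, hdz, hx, hy]
    simp only
    linear_combination (-(R ^ 2 * ω)) * Real.sin_sq_add_cos_sq (ω * s)
  have hddx : deriv (deriv x) = fun s => -(R * ω ^ 2) * Real.cos (ω * s) := by
    funext s; rw [hdx]
    have := (hd_cos (-(R * ω)) ω s).deriv
    rw [show (fun s => -(R * ω) * Real.sin (ω * s)) =
      fun s => -(R * ω) * Real.sin (ω * s) from rfl]
    have h2 : HasDerivAt (fun s => -(R * ω) * Real.sin (ω * s))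
        (-(R * ω) * (Real.cos (ω * s) * ω)) s := hd_sin (-(R * ω)) ω s
    rw [h2.deriv]; ring
  have hddy : deriv (deriv y) = fun s => -(R * ω ^ 2) * Real.sin (ω * s) := by
    funext s; rw [hdy]
    have h2 : HasDerivAt (fun s => (R * ω) * Real.cos (ω * s))
        ((R * ω) * (-Real.sin (ω * s) * ω)) s := hd_cos (R * ω) ω s
    rw [h2.deriv]; ring
  intro s
  have hcs : Real.sin (ω * s) ^ 2 + Real.cos (ω * s) ^ 2 = 1 :=
    Real.sin_sq_add_cos_sq (ω * s)
  refine ⟨by rw [hv0], ?_, ?_, ?_⟩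
  · rw [hv0, hdx, hdy]; simp only; nlinarith [hcs]
  · rw [hv0, hddx, hddy]
    simp
  · intro h
    have h1 : -(R * ω ^ 2) * Real.cos (ω * s) = 0 := congrArg Prod.fst h
    have h2 : -(R * ω ^ 2) * Real.sin (ω * s) = 0 := congrArg Prod.fst (congrArg Prod.snd h)
    have hRω2 : -(R * ω ^ 2) ≠ 0 := neg_ne_zero.mpr (by positivity)
    have hc := (mul_eq_zero.1 h1).resolve_left hRω2
    have hs := (mul_eq_zero.1 h2).resolve_left hRω2
    rw [hc, hs] at hcs; norm_num at hcs
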